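/- Let 0 < λ < 1, χ ≥ 1, and suppose λ ≥ (b(K) + χ c(K)) / (χ b(K) + c(K)). Let κ_X^{KK} = (b(K) − λ c(K))/(1+λ) and κ_Y^{KK} = (λ b(K) − c(K))/(1+λ), and let κ_X, κ_Y ∈ ℝ satisfy κ_X ≤ χκ_Y ≤ κ_X + (χκ_Y^{KK} − κ_X^{KK}); set γ := χκ_Y − κ_X. Define p(y) := (b(y) + χ c(y) + (1+λ)γ)/(λ(χ b(K) + c(K))) for y ∈ [0,K]. Then 0 ≤ p(y) ≤ 1 for all y ∈ [0,K], and the reactive two-point strategy σ_X^0[y_0] = p(y_0) δ_K + (1−p(y_0)) δ_0, σ_X[x,y] = p(y) δ_K + (1−p(y)) δ_0 satisfies, with ψ(s) := −χ b(s) − c(s) + γ, the identity (−c(x) − χ b(x) + γ) + λ(b(y) + χ c(y) + γ) + ((1−λ²)/λ)(b(y_0) + χ c(y_0) + γ) = ψ(x) − λ² ∫ ψ dσ_X[x,y] − (1−λ²) ∫ ψ dσ_X^0[y_0] for all x, y, y_0 ∈ [0,K]. Consequently, in the strictly-alternating continuous Donation Game in which Y moves first, this strategy unilaterally enforces π_X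 − κ_X = χ(π_Y − κ_Y). -/

import Mathlib

open MeasureTheory

private lemma myIntegrable {α : Type*} [TopologicalSpace α] [CompactSpace α] [T2Space α]
    [MeasurableSpace α] [OpensMeasurableSpace α] (μ : Measure α) [IsFiniteMeasure μ]
    {f : α → ℝ} (hf : Continuous f) : Integrable f μ :=
  hf.integrable_of_hasCompactSupport (HasCompactSupport.of_compactSpace f)

private lemma int_two_point {α : Type*} [MeasurableSpace α] [MeasurableSingletonClass α]
    (f : α → ℝ) (hf : StronglyMeasurable f) (x0 x1 : α) (a : ℝ) (ha : 0 ≤ a) (ha1 : a ≤ 1) :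
    ∫ s, f s ∂(ENNReal.ofReal a • Measure.dirac x1 + ENNReal.ofReal (1 - a) • Measure.dirac x0)
      = a * f x1 + (1 - a) * f x0 := by
  have hd : ∀ x : α, Integrable f (Measure.dirac x) := fun x =>
    ⟨hf.aestronglyMeasurable, by simp [HasFiniteIntegral, lintegral_dirac]⟩
  rw [integral_add_measure ((hd x1).smul_measure ENNReal.ofReal_ne_top)
      ((hd x0).smul_measure ENNReal.ofReal_ne_top),
    integral_smul_measure, integral_smul_measure, integral_dirac, integral_dirac,
    ENNReal.toReal_ofReal ha, ENNReal.toReal_ofReal (by linarith), smul_eq_mul, smul_eq_mul]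

private lemma key_int {β : Type*} [MeasurableSpace β] (μ : Measure β) [IsProbabilityMeasure μ]
    {α : Type*} [MeasurableSpace α] [MeasurableSingletonClass α]
    (ρ : Measure α) (x0 x1 : α) (q : β → ℝ) (hq : Measurable q)
    (hq0 : ∀ z, 0 ≤ q z) (hq1 : ∀ z, q z ≤ 1) (hqint : Integrable q μ)
    (hρ : ∀ E : Set α, MeasurableSet E →
      ρ E = ∫⁻ z, (ENNReal.ofReal (q z) • Measure.dirac x1
        + ENNReal.ofReal (1 - q z) • Measure.dirac x0) E ∂μ)
    (f : α → ℝ) (hf : StronglyMeasurable f) :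
    ∫ s, f s ∂ρ = (∫ z, q z ∂μ) * f x1 + (1 - ∫ z, q z ∂μ) * f x0 := by
  have ha0 : 0 ≤ ∫ z, q z ∂μ := integral_nonneg hq0
  have ha1 : (∫ z, q z ∂μ) ≤ 1 := by
    calc (∫ z, q z ∂μ) ≤ ∫ _, (1:ℝ) ∂μ := integral_mono hqint (integrable_const 1) hq1
    _ = 1 := by simp
  have h1q : Integrable (fun z => 1 - q z) μ := (integrable_const 1).sub hqint
  have hint1q : (∫ z, (1 - q z) ∂μ) = 1 - ∫ z, q z ∂μ := by
    rw [integral_sub (integrable_const 1) hqint]; simp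
  have hρ' : ρ = ENNReal.ofReal (∫ z, q z ∂μ) • Measure.dirac x1
      + ENNReal.ofReal (1 - ∫ z, q z ∂μ) • Measure.dirac x0 := by
    ext E hE
    rw [hρ E hE]
    simp only [Measure.coe_add, Pi.add_apply, Measure.smul_apply, smul_eq_mul]
    rw [lintegral_add_left (hq.ennreal_ofReal.mul_const _),
      lintegral_mul_const _ hq.ennreal_ofReal,
      lintegral_mul_const _ (hq.const_sub 1).ennreal_ofReal,
      ← ofReal_integral_eq_lintegral_ofReal hqint (Filter.Eventually.of_forall hq0),
      ← ofReal_integral_eq_lintegral_ofReal h1q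
        (Filter.Eventually.of_forall fun z => sub_nonneg.2 (hq1 z)),
      hint1q]
  rw [hρ']
  exact int_two_point f hf x0 x1 _ ha0 ha1

set_option maxHeartbeats 2000000 in
/-- Reactive two-point extortionate/generous strategies in the
strictly-alternating continuous Donation Game in which `Y` moves first: under
the stated conditions on `λ`, `χ`, `κ_X`, `κ_Y` and `γ = χκ_Y − κ_X`, the
reaction probabilities `p(y)` lie in `[0,1]`, the strategy
`σX0[y₀] = p(y₀) δ_K + (1−p(y₀)) δ_0`, `σX[x,y] = p(y) δ_K + (1−p(y)) δ_0`
satisfies the autocratic identity with `ψ(s) = −χ b(s) − c(s) + γ`, and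
consequently it unilaterally enforces `π_X − κ_X = χ (π_Y − κ_Y)` for every
strategy of player `Y`. -/
theorem stmt_14
    (K : ℝ) (hK : 0 < K) (b c : ℝ → ℝ)
    (hbC : ContinuousOn b (Set.Icc 0 K)) (hcC : ContinuousOn c (Set.Icc 0 K))
    (hbM : MonotoneOn b (Set.Icc 0 K)) (hcM : MonotoneOn c (Set.Icc 0 K))
    (hb0 : b 0 = 0) (hc0 : c 0 = 0)
    (hcb : ∀ s ∈ Set.Ioc (0 : ℝ) K, c s < b s)
    (hcpos : ∀ s ∈ Set.Ioc (0 : ℝ) K, 0 < c s)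
    (lam : ℝ) (hlam0 : 0 < lam) (hlam1 : lam < 1)
    (χ : ℝ) (hχ : 1 ≤ χ)
    (hlamge : (b K + χ * c K) / (χ * b K + c K) ≤ lam)
    (κX κY γ : ℝ) (hγ : γ = χ * κY - κX)
    (hκ1 : κX ≤ χ * κY)
    (hκ2 : χ * κY ≤ κX +
      (χ * ((lam * b K - c K) / (1 + lam)) - (b K - lam * c K) / (1 + lam)))
    (p : Set.Icc (0 : ℝ) K → ℝ)
    (hp : ∀ y : Set.Icc (0 : ℝ) K,
      p y = (b ↑y + χ * c ↑y + (1 + lam) * γ) / (lam * (χ * b K + c K)))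
    (σX0 : Set.Icc (0 : ℝ) K → Measure (Set.Icc (0 : ℝ) K))
    (hσX0 : ∀ y0 : Set.Icc (0 : ℝ) K, σX0 y0 =
      ENNReal.ofReal (p y0) • Measure.dirac (⟨K, Set.right_mem_Icc.mpr hK.le⟩ : Set.Icc (0 : ℝ) K)
        + ENNReal.ofReal (1 - p y0) • Measure.dirac (⟨0, Set.left_mem_Icc.mpr hK.le⟩ : Set.Icc (0 : ℝ) K))
    (σX : Set.Icc (0 : ℝ) K × Set.Icc (0 : ℝ) K → Measure (Set.Icc (0 : ℝ) K))
    (hσX : ∀ q : Set.Icc (0 : ℝ) K × Set.Icc (0 : ℝ) K, σX q =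
      ENNReal.ofReal (p q.2) • Measure.dirac (⟨K, Set.right_mem_Icc.mpr hK.le⟩ : Set.Icc (0 : ℝ) K)
        + ENNReal.ofReal (1 - p q.2) • Measure.dirac (⟨0, Set.left_mem_Icc.mpr hK.le⟩ : Set.Icc (0 : ℝ) K)) :
    (∀ y : Set.Icc (0 : ℝ) K, 0 ≤ p y ∧ p y ≤ 1) ∧
    (∀ x y y0 : Set.Icc (0 : ℝ) K,
      (-(c ↑x) - χ * b ↑x + γ) + lam * (b ↑y + χ * c ↑y + γ)
          + ((1 - lam ^ 2) / lam) * (b ↑y0 + χ * c ↑y0 + γ) =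
        (-(χ * b ↑x) - c ↑x + γ)
          - lam ^ 2 * (∫ s, (-(χ * b ↑s) - c ↑s + γ) ∂(σX (x, y)))
          - (1 - lam ^ 2) * (∫ s, (-(χ * b ↑s) - c ↑s + γ) ∂(σX0 y0))) ∧
    (∀ σY0 : Measure (Set.Icc (0 : ℝ) K), IsProbabilityMeasure σY0 →
      ∀ ν : ℕ → Measure (Set.Icc (0 : ℝ) K × Set.Icc (0 : ℝ) K),
      (∀ t, IsProbabilityMeasure (ν t)) →
      (∀ E : Set (Set.Icc (0 : ℝ) K), MeasurableSet E →
        ν 0 (E ×ˢ Set.univ) = ∫⁻ y0, σX0 y0 E ∂σY0) →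
      (∀ (t : ℕ) (E : Set (Set.Icc (0 : ℝ) K)), MeasurableSet E →
        ν (t + 1) (E ×ˢ Set.univ) = ∫⁻ q, σX q E ∂(ν t)) →
      ((1 - lam) * ((∫ y0, b ↑y0 ∂σY0) + ∑' t : ℕ, lam ^ (2 * t + 1) *
          ∫ q, (-(c ↑q.1) + lam * b ↑q.2) ∂(ν t))) - κX =
        χ * (((1 - lam) * ((∫ y0, -(c ↑y0) ∂σY0) + ∑' t : ℕ, lam ^ (2 * t + 1) *
          ∫ q, (b ↑q.1 + lam * (-(c ↑q.2))) ∂(ν t))) - κY)) := by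
  have hKm : K ∈ Set.Icc (0:ℝ) K := Set.right_mem_Icc.mpr hK.le
  have h0m : (0:ℝ) ∈ Set.Icc (0:ℝ) K := Set.left_mem_Icc.mpr hK.le
  have hcK : 0 < c K := hcpos K ⟨hK, le_refl K⟩
  have hbK : c K < b K := hcb K ⟨hK, le_refl K⟩
  have hχ0 : (0:ℝ) < χ := lt_of_lt_of_le one_pos hχ
  have hD : 0 < χ * b K + c K := by nlinarith
  have hlD : lam * (χ * b K + c K) ≠ 0 := (mul_pos hlam0 hD).ne'
  have hbnn : ∀ y : Set.Icc (0:ℝ) K, 0 ≤ b ↑y := fun y => by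
    have := hbM h0m y.2 y.2.1; rwa [hb0] at this
  have hcnn : ∀ y : Set.Icc (0:ℝ) K, 0 ≤ c ↑y := fun y => by
    have := hcM h0m y.2 y.2.1; rwa [hc0] at this
  have hble : ∀ y : Set.Icc (0:ℝ) K, b ↑y ≤ b K := fun y => hbM y.2 hKm y.2.2
  have hcle : ∀ y : Set.Icc (0:ℝ) K, c ↑y ≤ c K := fun y => hcM y.2 hKm y.2.2
  have hγnn : 0 ≤ γ := by rw [hγ]; linarith
  have h1lam : (0:ℝ) < 1 + lam := by linarith
  have hγub : (1 + lam) * γ ≤ χ * (lam * b K - c K) - (b K - lam * c K) := by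
    have h : χ * ((lam * b K - c K) / (1 + lam)) - (b K - lam * c K) / (1 + lam)
        = (χ * (lam * b K - c K) - (b K - lam * c K)) / (1 + lam) := by
      field_simp
    have h2 := hκ2
    rw [h] at h2
    rw [hγ, mul_comm, ← le_div_iff₀ h1lam]
    linarith
  have part1 : ∀ y : Set.Icc (0:ℝ) K, 0 ≤ p y ∧ p y ≤ 1 := by
    intro y
    rw [hp y]
    constructor
    · apply div_nonneg _ (mul_pos hlam0 hD).le
      have h1 := hbnn y; have h2 := hcnn y
      nlinarith
    · rw [div_le_one (mul_pos hlam0 hD)]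
      have h1 := hble y; have h2 := hcle y
      nlinarith [mul_le_mul_of_nonneg_left h2 hχ0.le]
  have hb' : Continuous (fun s : Set.Icc (0:ℝ) K => b ↑s) := hbC.restrict
  have hc' : Continuous (fun s : Set.Icc (0:ℝ) K => c ↑s) := hcC.restrict
  have hfc : Continuous (fun s : Set.Icc (0:ℝ) K => -(χ * b ↑s) - c ↑s + γ) :=
    (((continuous_const.mul hb').neg).sub hc').add continuous_const
  have eK : ((⟨K, Set.right_mem_Icc.mpr hK.le⟩ : Set.Icc (0:ℝ) K) : ℝ) = K := rfl
  have e0 : ((⟨0, Set.left_mem_Icc.mpr hK.le⟩ : Set.Icc (0:ℝ) K) : ℝ) = 0 := rfl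
  refine ⟨part1, ?_, ?_⟩
  · intro x y y0
    rw [hσX (x, y), hσX0 y0,
      int_two_point _ hfc.stronglyMeasurable _ _ _ (part1 (x, y).2).1 (part1 (x, y).2).2,
      int_two_point _ hfc.stronglyMeasurable _ _ _ (part1 y0).1 (part1 y0).2]
    simp only [eK, e0, hb0, hc0]
    rw [hp y, hp y0]
    field_simp
    ring
  · intro σY0 hσY0 ν hνprob hν0 hνs
    have hpc : Continuous p := by
      have hpe : p = fun y : Set.Icc (0:ℝ) K =>
          (b ↑y + χ * c ↑y + (1 + lam) * γ) / (lam * (χ * b K + c K)) := funext hp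
      rw [hpe]
      exact ((hb'.add (continuous_const.mul hc')).add continuous_const).div_const _
    have hgc : Continuous (fun s : Set.Icc (0:ℝ) K => b ↑s + χ * c ↑s) :=
      hb'.add (continuous_const.mul hc')
    set T := ∫ y0 : Set.Icc (0:ℝ) K, (b ↑y0 + χ * c ↑y0) ∂σY0 with hTdef
    set Sg : ℕ → ℝ := fun t =>
      ∫ q : Set.Icc (0:ℝ) K × Set.Icc (0:ℝ) K, (b ↑q.2 + χ * c ↑q.2) ∂(ν t) with hSgdef
    let W : ℕ → ℝ := fun n => Nat.rec T (fun s _ => Sg s) n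
    have hW0 : W 0 = T := rfl
    have hWs : ∀ t, W (t + 1) = Sg t := fun t => rfl
    -- value of ∫ f(q.1) dν t
    have hfval : ∀ t : ℕ, (∫ q : Set.Icc (0:ℝ) K × Set.Icc (0:ℝ) K,
        (-(χ * b ↑q.1) - c ↑q.1 + γ) ∂(ν t)) = γ - (W t + (1 + lam) * γ) / lam := by
      intro t
      haveI := hνprob t
      haveI := hσY0
      have hmap : (∫ q : Set.Icc (0:ℝ) K × Set.Icc (0:ℝ) K,
          (-(χ * b ↑q.1) - c ↑q.1 + γ) ∂(ν t))
          = ∫ s, (-(χ * b ↑s) - c ↑s + γ) ∂((ν t).map Prod.fst) :=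
        (integral_map measurable_fst.aemeasurable hfc.aestronglyMeasurable).symm
      have hend : ∀ a : ℝ, a * (lam * (χ * b K + c K)) = W t + (1 + lam) * γ →
          a * (-(χ * b K) - c K + γ) + (1 - a) * (-(χ * b 0) - c 0 + γ)
            = γ - (W t + (1 + lam) * γ) / lam := by
        intro a ha
        rw [← ha]
        rw [hb0, hc0]
        field_simp
        ring
      rcases t with _ | t
      · have hcond : ∀ E : Set (Set.Icc (0:ℝ) K), MeasurableSet E →
            ((ν 0).map Prod.fst) E = ∫⁻ y0,
              (ENNReal.ofReal (p y0) • Measure.dirac (⟨K, Set.right_mem_Icc.mpr hK.le⟩ : Set.Icc (0:ℝ) K)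
              + ENNReal.ofReal (1 - p y0) • Measure.dirac (⟨0, Set.left_mem_Icc.mpr hK.le⟩ : Set.Icc (0:ℝ) K)) E ∂σY0 := by
          intro E hE
          rw [Measure.map_apply measurable_fst hE, ← Set.prod_univ, hν0 E hE]
          exact lintegral_congr fun y0 => by rw [hσX0 y0]
        have hki := key_int σY0 ((ν 0).map Prod.fst) _ _ p hpc.measurable
          (fun z => (part1 z).1) (fun z => (part1 z).2) (myIntegrable σY0 hpc) hcond
          _ hfc.stronglyMeasurable
        rw [hmap, hki]
        apply hend
        have hpint : (∫ z, p z ∂σY0) = (T + (1 + lam) * γ) / (lam * (χ * b K + c K)) := by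
          simp only [hp]
          rw [integral_div, integral_add (myIntegrable σY0 hgc) (integrable_const _),
            integral_const, probReal_univ]
          simp
          rfl
        rw [hpint, div_mul_cancel₀ _ hlD, hW0]
      · have hcond : ∀ E : Set (Set.Icc (0:ℝ) K), MeasurableSet E →
            ((ν (t+1)).map Prod.fst) E = ∫⁻ q,
              (ENNReal.ofReal (p q.2) • Measure.dirac (⟨K, Set.right_mem_Icc.mpr hK.le⟩ : Set.Icc (0:ℝ) K)
              + ENNReal.ofReal (1 - p q.2) • Measure.dirac (⟨0, Set.left_mem_Icc.mpr hK.le⟩ : Set.Icc (0:ℝ) K)) E ∂(ν t) := by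
          intro E hE
          rw [Measure.map_apply measurable_fst hE, ← Set.prod_univ, hνs t E hE]
          exact lintegral_congr fun q => by rw [hσX q]
        haveI := hνprob t
        have hki := key_int (ν t) ((ν (t+1)).map Prod.fst) _ _
          (fun q : Set.Icc (0:ℝ) K × Set.Icc (0:ℝ) K => p q.2)
          (hpc.comp continuous_snd).measurable
          (fun z => (part1 z.2).1) (fun z => (part1 z.2).2)
          (myIntegrable (ν t) (hpc.comp continuous_snd)) hcond
          _ hfc.stronglyMeasurable
        rw [hmap, hki]
        beta_reduce
        apply hend
        have hpint : (∫ q : Set.Icc (0:ℝ) K × Set.Icc (0:ℝ) K, p q.2 ∂(ν t))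
            = (Sg t + (1 + lam) * γ) / (lam * (χ * b K + c K)) := by
          simp only [hp]
          have ig : Integrable (fun q : Set.Icc (0:ℝ) K × Set.Icc (0:ℝ) K =>
              b ↑q.2 + χ * c ↑q.2) (ν t) := myIntegrable (ν t) (hgc.comp continuous_snd)
          rw [integral_div, integral_add ig (integrable_const _), integral_const, probReal_univ]
          simp
          rfl
        rw [hpint, div_mul_cancel₀ _ hlD, hWs]
    -- bounds on W
    have hSg0 : ∀ t, 0 ≤ Sg t := fun t => integral_nonneg fun q => by
      show (0:ℝ) ≤ b ↑q.2 + χ * c ↑q.2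
      have := hbnn q.2; have := hcnn q.2; nlinarith
    have habs : ∀ (t : ℕ) (h : Set.Icc (0:ℝ) K × Set.Icc (0:ℝ) K → ℝ) (C : ℝ),
        (∀ q, ‖h q‖ ≤ C) → ‖∫ q, h q ∂(ν t)‖ ≤ C := by
      intro t h C hC
      haveI := hνprob t
      calc ‖∫ q, h q ∂(ν t)‖ ≤ C * ((ν t) Set.univ).toReal :=
            norm_integral_le_of_norm_le_const (Filter.Eventually.of_forall hC)
        _ = C := by simp
    have habs0 : ∀ (h : Set.Icc (0:ℝ) K → ℝ) (C : ℝ),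
        (∀ z, ‖h z‖ ≤ C) → ‖∫ z, h z ∂σY0‖ ≤ C := by
      intro h C hC
      haveI := hσY0
      calc ‖∫ z, h z ∂σY0‖ ≤ C * (σY0 Set.univ).toReal :=
            norm_integral_le_of_norm_le_const (Filter.Eventually.of_forall hC)
        _ = C := by simp
    have hSgM : ∀ t, Sg t ≤ b K + χ * c K := by
      intro t
      have h := habs t (fun q => b ↑q.2 + χ * c ↑q.2) (b K + χ * c K) (fun q => by
        show ‖b ↑q.2 + χ * c ↑q.2‖ ≤ b K + χ * c K
        rw [Real.norm_eq_abs, abs_le]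
        have h1 := hble q.2; have h2 := hcle q.2
        have h3 := hbnn q.2; have h4 := hcnn q.2
        constructor <;> nlinarith)
      rw [Real.norm_eq_abs, abs_le] at h
      exact h.2
    have hT0 : 0 ≤ T := integral_nonneg fun y0 => by
      show (0:ℝ) ≤ b ↑y0 + χ * c ↑y0
      have := hbnn y0; have := hcnn y0; nlinarith
    have hTM : T ≤ b K + χ * c K := by
      have h := habs0 (fun z => b ↑z + χ * c ↑z) (b K + χ * c K) (fun z => by
        show ‖b ↑z + χ * c ↑z‖ ≤ b K + χ * c K
        rw [Real.norm_eq_abs, abs_le]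
        have h1 := hble z; have h2 := hcle z
        have h3 := hbnn z; have h4 := hcnn z
        constructor <;> nlinarith)
      rw [Real.norm_eq_abs, abs_le] at h
      exact h.2
    have hWnn : ∀ t, 0 ≤ W t := fun t => by cases t with
      | zero => exact hT0
      | succ s => exact hSg0 s
    have hWM : ∀ t, W t ≤ b K + χ * c K := fun t => by cases t with
      | zero => exact hTM
      | succ s => exact hSgM s
    -- summability
    have hlam2 : lam ^ 2 < 1 := by nlinarith
    have hgeom : Summable (fun t : ℕ => (lam ^ 2) ^ t) :=
      summable_geometric_of_lt_one (by positivity) hlam2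
    have hu : Summable (fun t : ℕ => lam ^ (2 * t) * W t) := by
      apply Summable.of_nonneg_of_le
        (fun t => mul_nonneg (by positivity) (hWnn t))
        (fun t => ?_) (hgeom.mul_right (b K + χ * c K))
      rw [pow_mul]
      exact mul_le_mul_of_nonneg_left (hWM t) (by positivity)
    have hushift : Summable (fun t : ℕ => lam ^ (2 * (t + 1)) * W (t + 1)) :=
      (summable_nat_add_iff 1).mpr hu
    have hpowle : ∀ t : ℕ, lam ^ (2 * t + 1) ≤ (lam ^ 2) ^ t := by
      intro t
      calc lam ^ (2 * t + 1) = (lam ^ 2) ^ t * lam := by rw [pow_succ, pow_mul]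
        _ ≤ (lam ^ 2) ^ t * 1 := by
            apply mul_le_mul_of_nonneg_left hlam1.le (by positivity)
        _ = (lam ^ 2) ^ t := mul_one _
    have hsumX : Summable (fun t : ℕ => lam ^ (2 * t + 1) *
        ∫ q : Set.Icc (0:ℝ) K × Set.Icc (0:ℝ) K, (-(c ↑q.1) + lam * b ↑q.2) ∂(ν t)) := by
      apply Summable.of_norm_bounded (hgeom.mul_right (c K + b K))
      intro t
      rw [norm_mul, norm_pow, Real.norm_eq_abs, abs_of_pos hlam0]
      calc lam ^ (2 * t + 1) * ‖∫ q : Set.Icc (0:ℝ) K × Set.Icc (0:ℝ) K,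
            (-(c ↑q.1) + lam * b ↑q.2) ∂(ν t)‖
          ≤ (lam ^ 2) ^ t * (c K + b K) := by
            apply mul_le_mul (hpowle t) (habs t _ _ ?_) (norm_nonneg _) (by positivity)
            intro q
            beta_reduce
            rw [Real.norm_eq_abs, abs_le]
            have h1 := hcnn q.1; have h2 := hcle q.1
            have h3 := hbnn q.2; have h4 := hble q.2
            constructor <;> nlinarith
        _ = (lam ^ 2) ^ t * (c K + b K) := rfl
    have hsumY : Summable (fun t : ℕ => lam ^ (2 * t + 1) *
        ∫ q : Set.Icc (0:ℝ) K × Set.Icc (0:ℝ) K, (b ↑q.1 + lam * (-(c ↑q.2))) ∂(ν t)) := by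
      apply Summable.of_norm_bounded (hgeom.mul_right (b K + c K))
      intro t
      rw [norm_mul, norm_pow, Real.norm_eq_abs, abs_of_pos hlam0]
      calc lam ^ (2 * t + 1) * ‖∫ q : Set.Icc (0:ℝ) K × Set.Icc (0:ℝ) K,
            (b ↑q.1 + lam * (-(c ↑q.2))) ∂(ν t)‖
          ≤ (lam ^ 2) ^ t * (b K + c K) := by
            apply mul_le_mul (hpowle t) (habs t _ _ ?_) (norm_nonneg _) (by positivity)
            intro q
            beta_reduce
            rw [Real.norm_eq_abs, abs_le]
            have h1 := hcnn q.2; have h2 := hcle q.2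
            have h3 := hbnn q.1; have h4 := hble q.1
            constructor <;> nlinarith
        _ = (lam ^ 2) ^ t * (b K + c K) := rfl
    -- per-term identity
    have hterm : ∀ t : ℕ,
        (∫ q : Set.Icc (0:ℝ) K × Set.Icc (0:ℝ) K, (-(c ↑q.1) + lam * b ↑q.2) ∂(ν t))
          - χ * (∫ q : Set.Icc (0:ℝ) K × Set.Icc (0:ℝ) K, (b ↑q.1 + lam * (-(c ↑q.2))) ∂(ν t))
        = (γ - (W t + (1 + lam) * γ) / lam) - γ + lam * W (t + 1) := by
      intro t
      haveI := hνprob t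
      have i1 : Integrable (fun q : Set.Icc (0:ℝ) K × Set.Icc (0:ℝ) K =>
          -(c ↑q.1) + lam * b ↑q.2) (ν t) :=
        myIntegrable (ν t) (((hc'.comp continuous_fst).neg).add
          (continuous_const.mul (hb'.comp continuous_snd)))
      have i2 : Integrable (fun q : Set.Icc (0:ℝ) K × Set.Icc (0:ℝ) K =>
          b ↑q.1 + lam * (-(c ↑q.2))) (ν t) :=
        myIntegrable (ν t) ((hb'.comp continuous_fst).add
          (continuous_const.mul ((hc'.comp continuous_snd).neg)))
      have i3 : Integrable (fun q : Set.Icc (0:ℝ) K × Set.Icc (0:ℝ) K =>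
          -(χ * b ↑q.1) - c ↑q.1 + γ) (ν t) :=
        myIntegrable (ν t) (hfc.comp continuous_fst)
      have i4 : Integrable (fun q : Set.Icc (0:ℝ) K × Set.Icc (0:ℝ) K =>
          lam * (b ↑q.2 + χ * c ↑q.2) - γ) (ν t) :=
        myIntegrable (ν t) ((continuous_const.mul (hgc.comp continuous_snd)).sub
          continuous_const)
      have i5 : Integrable (fun q : Set.Icc (0:ℝ) K × Set.Icc (0:ℝ) K =>
          b ↑q.2 + χ * c ↑q.2) (ν t) :=
        myIntegrable (ν t) (hgc.comp continuous_snd)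
      have e1 : (∫ q : Set.Icc (0:ℝ) K × Set.Icc (0:ℝ) K, (-(c ↑q.1) + lam * b ↑q.2) ∂(ν t))
          - χ * (∫ q : Set.Icc (0:ℝ) K × Set.Icc (0:ℝ) K, (b ↑q.1 + lam * (-(c ↑q.2))) ∂(ν t))
          = ∫ q : Set.Icc (0:ℝ) K × Set.Icc (0:ℝ) K,
            ((-(c ↑q.1) + lam * b ↑q.2) - χ * (b ↑q.1 + lam * (-(c ↑q.2)))) ∂(ν t) := by
        rw [← integral_const_mul, ← integral_sub i1 (i2.const_mul χ)]
      have e2 : ∀ q : Set.Icc (0:ℝ) K × Set.Icc (0:ℝ) K,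
          (-(c ↑q.1) + lam * b ↑q.2) - χ * (b ↑q.1 + lam * (-(c ↑q.2)))
          = (-(χ * b ↑q.1) - c ↑q.1 + γ) + (lam * (b ↑q.2 + χ * c ↑q.2) - γ) := fun q => by ring
      rw [e1]
      simp only [e2]
      rw [integral_add i3 i4, integral_sub (i5.const_mul lam) (integrable_const γ),
        integral_const_mul, integral_const, probReal_univ, hfval t, hWs t]
      have hsg : (∫ q : Set.Icc (0:ℝ) K × Set.Icc (0:ℝ) K, (b ↑q.2 + χ * c ↑q.2) ∂(ν t))
          = Sg t := rfl
      rw [hsg]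
      simp only [ENNReal.toReal_one, one_smul, smul_eq_mul]
      ring
    -- summing up
    have hgoalsum :
        (∑' t : ℕ, lam ^ (2 * t + 1) *
          ∫ q : Set.Icc (0:ℝ) K × Set.Icc (0:ℝ) K, (-(c ↑q.1) + lam * b ↑q.2) ∂(ν t))
        - χ * ∑' t : ℕ, lam ^ (2 * t + 1) *
          ∫ q : Set.Icc (0:ℝ) K × Set.Icc (0:ℝ) K, (b ↑q.1 + lam * (-(c ↑q.2))) ∂(ν t)
        = -T - (1 + lam) * γ * (1 - lam ^ 2)⁻¹ := by
      rw [← tsum_mul_left, ← Summable.tsum_sub hsumX (hsumY.mul_left χ)]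
      have he : ∀ t : ℕ,
          lam ^ (2 * t + 1) * (∫ q : Set.Icc (0:ℝ) K × Set.Icc (0:ℝ) K,
            (-(c ↑q.1) + lam * b ↑q.2) ∂(ν t))
          - χ * (lam ^ (2 * t + 1) * ∫ q : Set.Icc (0:ℝ) K × Set.Icc (0:ℝ) K,
            (b ↑q.1 + lam * (-(c ↑q.2))) ∂(ν t))
          = (lam ^ (2 * (t + 1)) * W (t + 1) - lam ^ (2 * t) * W t)
            - ((1 + lam) * γ) * (lam ^ 2) ^ t := by
        intro t
        have h := hterm t
        have hcalc : lam ^ (2 * t + 1) * (∫ q : Set.Icc (0:ℝ) K × Set.Icc (0:ℝ) K,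
              (-(c ↑q.1) + lam * b ↑q.2) ∂(ν t))
            - χ * (lam ^ (2 * t + 1) * ∫ q : Set.Icc (0:ℝ) K × Set.Icc (0:ℝ) K,
              (b ↑q.1 + lam * (-(c ↑q.2))) ∂(ν t))
            = lam ^ (2 * t + 1) * ((∫ q : Set.Icc (0:ℝ) K × Set.Icc (0:ℝ) K,
              (-(c ↑q.1) + lam * b ↑q.2) ∂(ν t))
              - χ * (∫ q : Set.Icc (0:ℝ) K × Set.Icc (0:ℝ) K,
              (b ↑q.1 + lam * (-(c ↑q.2))) ∂(ν t))) := by ring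
        rw [hcalc, h]
        field_simp
        ring
      rw [tsum_congr he, Summable.tsum_sub (hushift.sub hu) (hgeom.mul_left ((1 + lam) * γ)),
        Summable.tsum_sub hushift hu, tsum_mul_left,
        tsum_geometric_of_lt_one (by positivity) hlam2]
      have hz := Summable.tsum_eq_zero_add hu
      rw [hz]
      have hu0 : lam ^ (2 * 0) * W 0 = T := by simp [hW0]
      rw [hu0]
      ring
    -- final assembly
    have hC0 : (∫ y0 : Set.Icc (0:ℝ) K, -(c ↑y0) ∂σY0)
        = - ∫ y0 : Set.Icc (0:ℝ) K, c ↑y0 ∂σY0 := integral_neg _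
    have hT : T = (∫ y0 : Set.Icc (0:ℝ) K, b ↑y0 ∂σY0)
        + χ * ∫ y0 : Set.Icc (0:ℝ) K, c ↑y0 ∂σY0 := by
      haveI := hσY0
      rw [hTdef, integral_add (myIntegrable σY0 hb') ((myIntegrable σY0 hc').const_mul χ),
        integral_const_mul]
    have h1l2 : (1:ℝ) - lam ^ 2 ≠ 0 := by nlinarith
    have hE : (1 - lam) * ((1 + lam) * γ * (1 - lam ^ 2)⁻¹) = γ := by
      field_simp
      ring
    linear_combination (1 - lam) * hgoalsum - (1 - lam) * hT -
      χ * (1 - lam) * hC0 - hE - hγ
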